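/- arXiv:1206.7101 — 3 statements merged into one kernel-verified Lean document; each statement's English description precedes it below -/
import Mathlib

section
/- Let a ∈ (0, 1/2), π, π' ∈ [a, 1-a], and ξ ∈ (0,1). Then the Kullback–Leibler divergence between Bernoulli(ξπ) and Bernoulli(ξπ') satisfies D(ξπ ‖ ξπ') ≥ ξ · ((π - π')² / (2π)) · (a/(1-a))². -/
/-- Kullback–Leibler divergence between Bernoulli distributions of parameters `p` and `q`. -/
noncomputable def bernoulliKL (p q : ℝ) : ℝ :=
  p * Real.log (p / q) + (1 - p) * Real.log ((1 - p) / (1 - q))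

private lemma hasDerivA {x : ℝ} (hx : 0 < x) :
    HasDerivAt (fun y : ℝ => y / 2 - 1 / (2 * y) - Real.log y)
      (1 / 2 + 1 / (2 * x ^ 2) - 1 / x) x := by
  have h1 : HasDerivAt (fun y : ℝ => y / 2) (1 / 2) x := (hasDerivAt_id x).div_const 2
  have h2x : (2 : ℝ) * x ≠ 0 := by positivity
  have h2 : HasDerivAt (fun y : ℝ => 1 / (2 * y)) (-2 / (2 * x) ^ 2) x := by
    have := (((hasDerivAt_id x).const_mul (2 : ℝ)).inv h2x)
    simpa [one_div, Pi.inv_def] using this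
  have h3 : HasDerivAt Real.log x⁻¹ x := Real.hasDerivAt_log (ne_of_gt hx)
  have := (h1.sub h2).sub h3
  refine this.congr_deriv ?_
  field_simp
  ring

private lemma hasDerivB {x : ℝ} (hx : 0 < x) :
    HasDerivAt (fun y : ℝ => y - 1 - (y - 1) ^ 2 / 2 - Real.log y)
      (1 - (x - 1) - 1 / x) x := by
  have h1 : HasDerivAt (fun y : ℝ => y - 1) (1 : ℝ) x := (hasDerivAt_id x).sub_const 1
  have h2 : HasDerivAt (fun y : ℝ => (y - 1) ^ 2 / 2) ((2 * (x - 1)) / 2) x := by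
    have := (((hasDerivAt_id x).sub_const 1).pow 2).div_const 2
    simpa using this
  have h3 : HasDerivAt Real.log x⁻¹ x := Real.hasDerivAt_log (ne_of_gt hx)
  have := (h1.sub h2).sub h3
  refine this.congr_deriv ?_
  field_simp

/-- For `u ≥ 1`, `log u ≤ u/2 - 1/(2u)`. -/
private lemma logA {u : ℝ} (hu : 1 ≤ u) : Real.log u ≤ u / 2 - 1 / (2 * u) := by
  set f : ℝ → ℝ := fun y => y / 2 - 1 / (2 * y) - Real.log y with hf
  have hpos : ∀ x ∈ Set.Icc (1 : ℝ) u, 0 < x := fun x hx => lt_of_lt_of_le one_pos hx.1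
  have hmono : MonotoneOn f (Set.Icc 1 u) := by
    apply monotoneOn_of_deriv_nonneg (convex_Icc 1 u)
    · intro x hx
      exact (hasDerivA (hpos x hx)).continuousAt.continuousWithinAt
    · intro x hx
      have hx' := hpos x (interior_subset hx)
      exact (hasDerivA hx').differentiableAt.differentiableWithinAt
    · intro x hx
      have hx' := hpos x (interior_subset hx)
      rw [(hasDerivA hx').deriv]
      have h : 1 / 2 + 1 / (2 * x ^ 2) - 1 / x = (x - 1) ^ 2 / (2 * x ^ 2) := by
        field_simp; ring
      rw [h]; positivity
  have h1 : f 1 ≤ f u := hmono (Set.left_mem_Icc.2 hu) (Set.right_mem_Icc.2 hu) hu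
  have hf1 : f 1 = 0 := by simp [hf]
  rw [hf1] at h1
  simp only [hf] at h1
  linarith

/-- For `0 < u ≤ 1`, `log u ≤ (u - 1) - (u-1)²/2`. -/
private lemma logB {u : ℝ} (h0 : 0 < u) (h1 : u ≤ 1) :
    Real.log u ≤ (u - 1) - (u - 1) ^ 2 / 2 := by
  set f : ℝ → ℝ := fun y => y - 1 - (y - 1) ^ 2 / 2 - Real.log y with hf
  have hpos : ∀ x ∈ Set.Icc u 1, 0 < x := fun x hx => lt_of_lt_of_le h0 hx.1
  have hanti : AntitoneOn f (Set.Icc u 1) := by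
    apply antitoneOn_of_deriv_nonpos (convex_Icc u 1)
    · intro x hx
      exact (hasDerivB (hpos x hx)).continuousAt.continuousWithinAt
    · intro x hx
      have hx' := hpos x (interior_subset hx)
      exact (hasDerivB hx').differentiableAt.differentiableWithinAt
    · intro x hx
      have hx' := hpos x (interior_subset hx)
      rw [(hasDerivB hx').deriv]
      have h : 1 - (x - 1) - 1 / x = -((x - 1) ^ 2 / x) := by
        field_simp; ring
      rw [h]
      have : 0 ≤ (x - 1) ^ 2 / x := by positivity
      linarith
  have h2 : f 1 ≤ f u := hanti (Set.left_mem_Icc.2 h1) (Set.right_mem_Icc.2 h1) h1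
  have hf1 : f 1 = 0 := by simp [hf]
  rw [hf1] at h2
  simp only [hf] at h2
  linarith

set_option maxHeartbeats 1000000 in
theorem stmt_1 (a : ℝ) (ha : a ∈ Set.Ioo (0 : ℝ) (1/2))
    (π π' : ℝ) (hπ : π ∈ Set.Icc a (1 - a)) (hπ' : π' ∈ Set.Icc a (1 - a))
    (ξ : ℝ) (hξ : ξ ∈ Set.Ioo (0 : ℝ) 1) :
    ξ * ((π - π') ^ 2 / (2 * π)) * (a / (1 - a)) ^ 2 ≤ bernoulliKL (ξ * π) (ξ * π') := by
  obtain ⟨ha0, ha2⟩ := ha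
  obtain ⟨hπ1, hπ2⟩ := hπ
  obtain ⟨hπ'1, hπ'2⟩ := hπ'
  obtain ⟨hξ0, hξ1⟩ := hξ
  have ha1 : a < 1 - a := by linarith
  have hπ0 : 0 < π := lt_of_lt_of_le ha0 hπ1
  have hπ'0 : 0 < π' := lt_of_lt_of_le ha0 hπ'1
  set p := ξ * π with hp_def
  set q := ξ * π' with hq_def
  have hp0 : 0 < p := mul_pos hξ0 hπ0
  have hq0 : 0 < q := mul_pos hξ0 hπ'0
  have hp1 : p < 1 := by
    have : p < 1 * 1 := by
      apply mul_lt_mul'' hξ1 (by linarith) (le_of_lt hξ0) (le_of_lt hπ0)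
    linarith
  have hq1 : q < 1 := by
    have : q < 1 * 1 := by
      apply mul_lt_mul'' hξ1 (by linarith) (le_of_lt hξ0) (le_of_lt hπ'0)
    linarith
  -- second term bound: (1-p) log((1-p)/(1-q)) ≥ q - p
  have hstep1 : q - p ≤ (1 - p) * Real.log ((1 - p) / (1 - q)) := by
    have hfrac : 0 < (1 - p) / (1 - q) := div_pos (by linarith) (by linarith)
    have h := Real.one_sub_inv_le_log_of_pos hfrac
    have hinv : ((1 - p) / (1 - q))⁻¹ = (1 - q) / (1 - p) := by
      rw [inv_div]
    rw [hinv] at h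
    have hne : (1:ℝ) - p ≠ 0 := by linarith
    have h2 := mul_le_mul_of_nonneg_left h (by linarith : (0:ℝ) ≤ 1 - p)
    have e : (1 - p) * (1 - (1 - q) / (1 - p)) = q - p := by
      field_simp [hne]
      ring
    linarith [e ▸ h2]
  -- first term: p log(p/q) = -p log(q/p)
  have hlogswap : Real.log (p / q) = -Real.log (q / p) := by
    rw [Real.log_div (ne_of_gt hp0) (ne_of_gt hq0),
        Real.log_div (ne_of_gt hq0) (ne_of_gt hp0)]
    ring
  have hu0 : 0 < q / p := div_pos hq0 hp0
  rcases le_total π' π with hcase | hcase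
  · -- q ≤ p : D ≥ (p-q)²/(2p)
    have hqp : q ≤ p := by
      apply mul_le_mul_of_nonneg_left hcase (le_of_lt hξ0)
    have hu1 : q / p ≤ 1 := (div_le_one hp0).2 hqp
    have hlog := logB hu0 hu1
    have hbound : (p - q) ^ 2 / (2 * p) ≤ bernoulliKL p q := by
      unfold bernoulliKL
      rw [hlogswap]
      have h2 : p * -Real.log (q / p) ≥ p * -((q / p - 1) - (q / p - 1) ^ 2 / 2) := by
        apply mul_le_mul_of_nonneg_left (by linarith) (le_of_lt hp0)
      have hexp : p * -((q / p - 1) - (q / p - 1) ^ 2 / 2)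
          = (p - q) + (p - q) ^ 2 / (2 * p) := by
        field_simp
        ring
      rw [hexp] at h2
      linarith
    refine le_trans ?_ hbound
    have heq : (p - q) ^ 2 / (2 * p) = ξ * ((π - π') ^ 2 / (2 * π)) := by
      rw [hp_def, hq_def]
      field_simp
    rw [heq]
    have hc : (a / (1 - a)) ^ 2 ≤ 1 := by
      rw [sq_le_one_iff_abs_le_one, abs_le]
      constructor
      · have : 0 < a / (1 - a) := div_pos ha0 (by linarith)
        linarith
      · rw [div_le_one (by linarith)]; linarith
    have hnn : 0 ≤ ξ * ((π - π') ^ 2 / (2 * π)) := by positivity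
    nlinarith
  · -- p ≤ q : D ≥ (p-q)²/(2q)
    have hpq : p ≤ q := by
      apply mul_le_mul_of_nonneg_left hcase (le_of_lt hξ0)
    have hu1 : 1 ≤ q / p := (one_le_div hp0).2 hpq
    have hlog := logA hu1
    have hbound : (p - q) ^ 2 / (2 * q) ≤ bernoulliKL p q := by
      unfold bernoulliKL
      rw [hlogswap]
      have h2 : p * -Real.log (q / p) ≥ p * -(q / p / 2 - 1 / (2 * (q / p))) := by
        apply mul_le_mul_of_nonneg_left (by linarith) (le_of_lt hp0)
      have hexp : p * -(q / p / 2 - 1 / (2 * (q / p)))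
          = (p - q) + (p - q) ^ 2 / (2 * q) := by
        field_simp
        ring
      rw [hexp] at h2
      linarith
    refine le_trans ?_ hbound
    have heq : (p - q) ^ 2 / (2 * q) = ξ * ((π - π') ^ 2 / (2 * π')) := by
      rw [hp_def, hq_def]
      field_simp
    rw [heq, div_pow]
    have key : π' * a ^ 2 ≤ π * (1 - a) ^ 2 := by
      have k1 : π' * a ^ 2 ≤ (1 - a) * a ^ 2 :=
        mul_le_mul_of_nonneg_right hπ'2 (sq_nonneg a)
      have k2 : (1 - a) * a ^ 2 ≤ a * (1 - a) ^ 2 := by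
        nlinarith [mul_nonneg ha0.le (show (0:ℝ) ≤ 1 - a by linarith), ha1]
      have k3 : a * (1 - a) ^ 2 ≤ π * (1 - a) ^ 2 :=
        mul_le_mul_of_nonneg_right hπ1 (sq_nonneg _)
      linarith
    have hne1 : (1:ℝ) - a ≠ 0 := by linarith
    have expand : ξ * ((π - π') ^ 2 / (2 * π')) -
        ξ * ((π - π') ^ 2 / (2 * π)) * (a ^ 2 / (1 - a) ^ 2)
        = ξ * (π - π') ^ 2 * (π * (1 - a) ^ 2 - π' * a ^ 2)
          / (2 * π * π' * (1 - a) ^ 2) := by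
      field_simp [hπ0.ne', hπ'0.ne', hne1]
    have hnum : 0 ≤ ξ * (π - π') ^ 2 * (π * (1 - a) ^ 2 - π' * a ^ 2) := by
      apply mul_nonneg (by positivity) (by linarith)
    have hpos2 : 0 ≤ ξ * (π - π') ^ 2 * (π * (1 - a) ^ 2 - π' * a ^ 2)
        / (2 * π * π' * (1 - a) ^ 2) := by
      have hden : (0:ℝ) ≤ 2 * π * π' * (1 - a) ^ 2 := by positivity
      exact div_nonneg hnum hden
    linarith
end

section
/- Let a ∈ (0, 1/2), π, π', π'' ∈ [a, 1-a], and ξ ∈ (0,1). For Bernoulli densities f(x; p) = p^x (1-p)^{1-x} on {0,1}, one has |ξπ''·log(π/π') + (1 - ξπ'')·log((1-ξπ)/(1-ξπ'))| ≤ ξ·|π - π'| / a. -/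
theorem stmt_2 (a : ℝ) (ha : a ∈ Set.Ioo (0 : ℝ) (1/2))
    (π π' π'' : ℝ) (hπ : π ∈ Set.Icc a (1 - a)) (hπ' : π' ∈ Set.Icc a (1 - a))
    (hπ'' : π'' ∈ Set.Icc a (1 - a)) (ξ : ℝ) (hξ : ξ ∈ Set.Ioo (0 : ℝ) 1) :
    |ξ * π'' * Real.log (π / π') + (1 - ξ * π'') * Real.log ((1 - ξ * π) / (1 - ξ * π'))|
      ≤ ξ * |π - π'| / a := by
  obtain ⟨ha0, ha2⟩ := ha
  obtain ⟨hπ1, hπ2⟩ := hπ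
  obtain ⟨hπ'1, hπ'2⟩ := hπ'
  obtain ⟨hπ''1, hπ''2⟩ := hπ''
  obtain ⟨hξ0, hξ1⟩ := hξ
  set s : Set ℝ := Set.Icc a (1 - a) with hs
  have hpos : ∀ t ∈ s, 0 < t ∧ a < 1 - ξ * t := by
    intro t ht
    obtain ⟨ht1, ht2⟩ := ht
    constructor
    · linarith
    · nlinarith
  set f : ℝ → ℝ := fun t => ξ * π'' * Real.log t + (1 - ξ * π'') * Real.log (1 - ξ * t)
    with hf
  set f' : ℝ → ℝ := fun t => ξ * π'' / t - (1 - ξ * π'') * ξ / (1 - ξ * t) with hf'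
  have hderiv : ∀ t ∈ s, HasDerivWithinAt f (f' t) s t := by
    intro t ht
    obtain ⟨ht0, ht1⟩ := hpos t ht
    have h1 : HasDerivAt (fun t : ℝ => Real.log t) (1 / t) t := by
      simpa using Real.hasDerivAt_log (ne_of_gt ht0)
    have h2 : HasDerivAt (fun t : ℝ => Real.log (1 - ξ * t)) (-ξ / (1 - ξ * t)) t := by
      have hlin : HasDerivAt (fun t : ℝ => 1 - ξ * t) (-ξ) t := by
        simpa using (((hasDerivAt_id t).const_mul ξ).const_sub (1:ℝ))
      simpa [div_eq_mul_inv, mul_comm, Function.comp_def] using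
        (Real.hasDerivAt_log (by linarith : (1 - ξ * t) ≠ 0)).comp t hlin
    have := ((h1.const_mul (ξ * π'')).add (h2.const_mul (1 - ξ * π'')))
    refine HasDerivAt.hasDerivWithinAt ?_
    convert this using 1
    · rfl
    · simp only [hf']
      ring
  have hbound : ∀ t ∈ s, ‖f' t‖ ≤ ξ / a := by
    intro t ht
    obtain ⟨ht0, ht1⟩ := hpos t ht
    obtain ⟨ht1', ht2'⟩ := ht
    have hx : 0 ≤ ξ * π'' / t := div_nonneg (by nlinarith) ht0.le
    have hy : 0 ≤ (1 - ξ * π'') * ξ / (1 - ξ * t) := by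
      have : 0 ≤ 1 - ξ * π'' := by nlinarith
      have h' : 0 < 1 - ξ * t := by linarith
      positivity
    have hxb : ξ * π'' / t ≤ ξ / a := by
      rw [div_le_div_iff₀ ht0 ha0]
      nlinarith [mul_le_mul_of_nonneg_left hπ''2 hξ0.le, mul_le_mul_of_nonneg_left ht1' hξ0.le, mul_pos hξ0 ha0]
    have hyb : (1 - ξ * π'') * ξ / (1 - ξ * t) ≤ ξ / a := by
      rw [div_le_div_iff₀ (by linarith) ha0]
      nlinarith [mul_pos hξ0 ha0, mul_nonneg (mul_nonneg hξ0.le (by linarith : (0:ℝ) ≤ π'')) ha0.le]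
    rw [Real.norm_eq_abs, hf', abs_sub_le_iff]
    constructor <;> linarith
  have hconv : Convex ℝ s := convex_Icc _ _
  have key := hconv.norm_image_sub_le_of_norm_hasDerivWithin_le hderiv hbound
    (⟨hπ'1, hπ'2⟩ : π' ∈ s) (⟨hπ1, hπ2⟩ : π ∈ s)
  have hπ0 : 0 < π := lt_of_lt_of_le ha0 hπ1
  have hπ'0 : 0 < π' := lt_of_lt_of_le ha0 hπ'1
  have hq0 : (0:ℝ) < 1 - ξ * π := by nlinarith
  have hq'0 : (0:ℝ) < 1 - ξ * π' := by nlinarith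
  have hlog1 : Real.log (π / π') = Real.log π - Real.log π' :=
    Real.log_div (ne_of_gt hπ0) (ne_of_gt hπ'0)
  have hlog2 : Real.log ((1 - ξ * π) / (1 - ξ * π')) =
      Real.log (1 - ξ * π) - Real.log (1 - ξ * π') :=
    Real.log_div (ne_of_gt hq0) (ne_of_gt hq'0)
  have heq : ξ * π'' * Real.log (π / π') + (1 - ξ * π'') *
      Real.log ((1 - ξ * π) / (1 - ξ * π')) = f π - f π' := by
    rw [hlog1, hlog2]
    simp only [hf]
    ring
  rw [heq]
  calc |f π - f π'| ≤ ξ / a * ‖π - π'‖ := by simpa [Real.norm_eq_abs] using key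
    _ = ξ * |π - π'| / a := by rw [Real.norm_eq_abs]; ring
end

section
/- Let ξ ∈ (0,1), a ∈ (0,1/2), π, π' ∈ [a,1-a], γ, γ' be parameters of densities f̃(·;γ), f̃(·;γ') with KL divergence D̃(γ ‖ γ'). For zero-inflated densities f(x; ξπ, γ) = ξπ·f̃(x; γ) + (1-ξπ)·δ₀(x) (where f̃ puts no mass at 0), the KL divergence satisfies D((ξπ, γ) ‖ (ξπ', γ')) = D_Ber(ξπ ‖ ξπ') + ξπ·D̃(γ ‖ γ') ≥ ξ·[ ((π-π')²/(2π))·(a/(1-a))² + a·D̃(γ ‖ γ') ]. -/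
open MeasureTheory

/-- Kullback–Leibler divergence of the zero-inflated density
`f(x; ρ, g) = ρ g(x) + (1-ρ) δ₀(x)` against `f(x; ρ', g')`, where the continuous parts
`g, g'` put no mass at `0` (w.r.t. `μ` with `μ {0} = 0`):  the Dirac part contributes
`(1-ρ) log((1-ρ)/(1-ρ'))` and the continuous part `∫ ρ g log(ρ g / (ρ' g')) dμ`. -/
noncomputable def ziKL {X : Type*} [MeasurableSpace X] (μ : Measure X)
    (ρ ρ' : ℝ) (g g' : X → ℝ) : ℝ :=
  (∫ x, ρ * g x * Real.log ((ρ * g x) / (ρ' * g' x)) ∂μ)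
    + (1 - ρ) * Real.log ((1 - ρ) / (1 - ρ'))

lemma hdf1 (s : ℝ) (hs : 0 < s) :
    HasDerivAt (fun s : ℝ => s * Real.log s - s + 1 - (s - 1) ^ 2 / 2)
      (Real.log s + 1 - s) s := by
  have h1 : HasDerivAt (fun s : ℝ => s * Real.log s) (Real.log s + 1) s := by
    have := (hasDerivAt_id s).mul (Real.hasDerivAt_log hs.ne')
    refine this.congr_deriv ?_
    field_simp
    simp only [id]; ring
  have h2 : HasDerivAt (fun s : ℝ => (s - 1) ^ 2 / 2) (s - 1) s := by
    have := (((hasDerivAt_id s).sub_const 1).pow 2).div_const 2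
    refine this.congr_deriv ?_
    simp
  have := ((h1.sub (hasDerivAt_id s)).add_const 1).sub h2
  refine this.congr_deriv ?_
  ring

lemma hdf2 (s : ℝ) (hs : 0 < s) :
    HasDerivAt (fun s : ℝ => 2 * s ^ 2 * Real.log s - 3 * s ^ 2 + 4 * s - 1)
      (4 * s * Real.log s - 4 * s + 4) s := by
  have h1 : HasDerivAt (fun s : ℝ => 2 * s ^ 2 * Real.log s)
      (4 * s * Real.log s + 2 * s) s := by
    have := (((hasDerivAt_pow 2 s).const_mul 2).mul (Real.hasDerivAt_log hs.ne'))
    refine this.congr_deriv ?_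
    field_simp
    ring
  have h2 : HasDerivAt (fun s : ℝ => 3 * s ^ 2) (6 * s) s := by
    have := (hasDerivAt_pow 2 s).const_mul 3
    refine this.congr_deriv ?_
    simp; ring
  have h3 : HasDerivAt (fun s : ℝ => 4 * s) 4 s := by
    have := (hasDerivAt_id s).const_mul 4
    refine this.congr_deriv ?_; ring
  have := ((h1.sub h2).add h3).sub_const 1
  refine this.congr_deriv ?_
  ring

lemma slog (s : ℝ) (hs : 0 < s) : s - 1 ≤ s * Real.log s := by
  have h := Real.log_le_sub_one_of_pos (show (0:ℝ) < s⁻¹ by positivity)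
  rw [Real.log_inv] at h
  have hne : s * s⁻¹ = 1 := mul_inv_cancel₀ hs.ne'
  nlinarith [mul_le_mul_of_nonneg_left h hs.le]

lemma core (t : ℝ) (ht : 0 < t) :
    (t - 1) ^ 2 / (2 * max t 1) ≤ t * Real.log t - t + 1 := by
  rcases le_total t 1 with h | h
  · rw [max_eq_right h]
    set f : ℝ → ℝ := fun s => s * Real.log s - s + 1 - (s - 1) ^ 2 / 2 with hf
    have hanti : AntitoneOn f (Set.Icc t 1) := by
      apply antitoneOn_of_deriv_nonpos (convex_Icc t 1)
      · exact fun x hx => ((hdf1 x (lt_of_lt_of_le ht hx.1)).differentiableAt).continuousAt.continuousWithinAt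
      · intro x hx
        rw [interior_Icc] at hx
        exact ((hdf1 x (lt_trans ht hx.1)).differentiableAt).differentiableWithinAt
      · intro x hx
        rw [interior_Icc] at hx
        have hx0 : 0 < x := lt_trans ht hx.1
        rw [(hdf1 x hx0).deriv]
        have := Real.log_le_sub_one_of_pos hx0
        linarith
    have h1 : f 1 ≤ f t := hanti (Set.mem_Icc.mpr ⟨le_refl t, h⟩) (Set.right_mem_Icc.mpr h) h
    have hf1 : f 1 = 0 := by simp [hf]
    have hft : f t = t * Real.log t - t + 1 - (t - 1) ^ 2 / 2 := rfl
    rw [hf1, hft] at h1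
    linarith
  · rw [max_eq_left h]
    set F : ℝ → ℝ := fun s => 2 * s ^ 2 * Real.log s - 3 * s ^ 2 + 4 * s - 1 with hF
    have hmono : MonotoneOn F (Set.Icc 1 t) := by
      apply monotoneOn_of_deriv_nonneg (convex_Icc 1 t)
      · exact fun x hx => ((hdf2 x (lt_of_lt_of_le one_pos hx.1)).differentiableAt).continuousAt.continuousWithinAt
      · intro x hx
        rw [interior_Icc] at hx
        exact ((hdf2 x (lt_trans one_pos hx.1)).differentiableAt).differentiableWithinAt
      · intro x hx
        rw [interior_Icc] at hx
        have hx0 : 0 < x := lt_trans one_pos hx.1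
        rw [(hdf2 x hx0).deriv]
        have := slog x hx0
        linarith
    have h1 : F 1 ≤ F t := hmono (Set.left_mem_Icc.mpr h) (Set.mem_Icc.mpr ⟨h, le_refl t⟩) h
    have hF1 : F 1 = 0 := by simp [hF]; norm_num
    have hFt : F t = 2 * t ^ 2 * Real.log t - 3 * t ^ 2 + 4 * t - 1 := rfl
    rw [hF1, hFt] at h1
    rw [div_le_iff₀ (by positivity)]
    nlinarith

lemma key (x y : ℝ) (hx : 0 < x) (hy : 0 < y) :
    x - y + (x - y) ^ 2 / (2 * max x y) ≤ x * Real.log (x / y) := by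
  have ht : 0 < x / y := div_pos hx hy
  have hcore := core (x / y) ht
  have hm : 0 < max (x / y) 1 := lt_of_lt_of_le one_pos (le_max_right _ _)
  rw [div_le_iff₀ (by positivity)] at hcore
  have hmax : max x y = y * max (x / y) 1 := by
    rw [mul_max_of_nonneg _ _ hy.le, mul_div_cancel₀ _ hy.ne', mul_one]
  set r := x / y with hr
  have hx' : x = y * r := (mul_div_cancel₀ _ hy.ne').symm
  rw [hmax, hx']
  set m := max r 1
  have h2 : (y * r - y) ^ 2 ≤ (y * r * Real.log r - (y * r - y)) * (2 * (y * m)) := by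
    nlinarith [mul_le_mul_of_nonneg_left hcore (mul_pos hy hy).le]
  have h3 := (div_le_iff₀ (show (0:ℝ) < 2 * (y * m) by positivity)).mpr h2
  linarith

lemma bkl_lb (p q : ℝ) (hp0 : 0 < p) (hp1 : p < 1) (hq0 : 0 < q) (hq1 : q < 1) :
    (p - q) ^ 2 / (2 * max p q) ≤ bernoulliKL p q := by
  have h1 := key p q hp0 hq0
  have h2 := key (1 - p) (1 - q) (by linarith) (by linarith)
  have e : (1 : ℝ) - p - (1 - q) = -(p - q) := by ring
  rw [e, neg_sq] at h2
  have hmpos : 0 < max (1 - p) (1 - q) := lt_of_lt_of_le (by linarith) (le_max_left _ _)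
  have hnn : 0 ≤ (p - q) ^ 2 / (2 * max (1 - p) (1 - q)) := by positivity
  unfold bernoulliKL
  linarith

set_option maxHeartbeats 800000 in
theorem stmt_19 {X : Type*} [MeasurableSpace X] (μ : Measure X)
    (ξ a : ℝ) (hξ : ξ ∈ Set.Ioo (0 : ℝ) 1) (ha : a ∈ Set.Ioo (0 : ℝ) (1/2))
    (π π' : ℝ) (hπ : π ∈ Set.Icc a (1 - a)) (hπ' : π' ∈ Set.Icc a (1 - a))
    (g g' : X → ℝ) (hg : ∀ x, 0 < g x) (hg' : ∀ x, 0 < g' x)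
    (hg1 : ∫ x, g x ∂μ = 1) (hg'1 : ∫ x, g' x ∂μ = 1)
    (hgint : Integrable (fun x => g x * Real.log (g x / g' x)) μ)
    (Dtil : ℝ) (hDtil : Dtil = ∫ x, g x * Real.log (g x / g' x) ∂μ) :
    ziKL μ (ξ * π) (ξ * π') g g' = bernoulliKL (ξ * π) (ξ * π') + ξ * π * Dtil ∧
    ξ * ((π - π') ^ 2 / (2 * π) * (a / (1 - a)) ^ 2 + a * Dtil)
      ≤ ziKL μ (ξ * π) (ξ * π') g g' := by
  obtain ⟨hξ0, hξ1⟩ := hξ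
  obtain ⟨ha0, ha2⟩ := ha
  obtain ⟨hπa, hπb⟩ := hπ
  obtain ⟨hπ'a, hπ'b⟩ := hπ'
  have h1a : 0 < 1 - a := by linarith
  have hπ0 : 0 < π := lt_of_lt_of_le ha0 hπa
  have hπ'0 : 0 < π' := lt_of_lt_of_le ha0 hπ'a
  have hp0 : 0 < ξ * π := mul_pos hξ0 hπ0
  have hp'0 : 0 < ξ * π' := mul_pos hξ0 hπ'0
  have hp1 : ξ * π < 1 := by nlinarith
  have hp'1 : ξ * π' < 1 := by nlinarith
  -- integrability of g and g'
  have hgI : Integrable g μ := by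
    by_contra hcon
    rw [integral_undef hcon] at hg1
    exact one_ne_zero hg1.symm
  have hg'I : Integrable g' μ := by
    by_contra hcon
    rw [integral_undef hcon] at hg'1
    exact one_ne_zero hg'1.symm
  -- part 1
  have hsplit : (fun x => ξ * π * g x * Real.log ((ξ * π * g x) / (ξ * π' * g' x)))
      = fun x => (ξ * π * Real.log ((ξ * π) / (ξ * π'))) * g x
        + (ξ * π) * (g x * Real.log (g x / g' x)) := by
    funext x
    have e1 : (ξ * π * g x) / (ξ * π' * g' x) = ((ξ * π) / (ξ * π')) * (g x / g' x) :=
      (div_mul_div_comm _ _ _ _).symm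
    rw [e1, Real.log_mul (div_pos hp0 hp'0).ne' (div_pos (hg x) (hg' x)).ne']
    ring
  have hint : (∫ x, ξ * π * g x * Real.log ((ξ * π * g x) / (ξ * π' * g' x)) ∂μ)
      = ξ * π * Real.log ((ξ * π) / (ξ * π')) + ξ * π * Dtil := by
    rw [hsplit, integral_add (hgI.const_mul _) (hgint.const_mul _),
      integral_const_mul, integral_const_mul, hg1, hDtil]
    ring
  have hpart1 : ziKL μ (ξ * π) (ξ * π') g g'
      = bernoulliKL (ξ * π) (ξ * π') + ξ * π * Dtil := by
    unfold ziKL bernoulliKL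
    rw [hint]; ring
  refine ⟨hpart1, ?_⟩
  -- Dtil nonneg
  have hDnn : 0 ≤ Dtil := by
    rw [hDtil]
    have hpt : ∀ x, g x - g' x ≤ g x * Real.log (g x / g' x) := by
      intro x
      have hlog : Real.log (g' x / g x) ≤ g' x / g x - 1 :=
        Real.log_le_sub_one_of_pos (div_pos (hg' x) (hg x))
      have hneg : Real.log (g x / g' x) = - Real.log (g' x / g x) := by
        rw [← Real.log_inv]
        congr 1
        rw [inv_div]
      have hcanc : g x * (g' x / g x) = g' x := by
        rw [mul_comm, div_mul_eq_mul_div, mul_div_assoc, div_self (hg x).ne', mul_one]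
      have := mul_le_mul_of_nonneg_left hlog (hg x).le
      rw [hneg]
      nlinarith
    have h0 : (0 : ℝ) = ∫ x, (g x - g' x) ∂μ := by
      rw [integral_sub hgI hg'I, hg1, hg'1]; ring
    rw [h0]
    exact integral_mono (hgI.sub hg'I) hgint (fun x => hpt x)
  -- Bernoulli bound
  have hB := bkl_lb (ξ * π) (ξ * π') hp0 hp1 hp'0 hp'1
  have hM0 : 0 < max π π' := lt_of_lt_of_le hπ0 (le_max_left _ _)
  have hmax : max (ξ * π) (ξ * π') = ξ * max π π' := (mul_max_of_nonneg _ _ hξ0.le).symm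
  have hEq : (ξ * π - ξ * π') ^ 2 / (2 * (ξ * max π π'))
      = ξ * ((π - π') ^ 2 / (2 * max π π')) := by
    field_simp
  rw [hmax, hEq] at hB
  -- comparison of quadratic terms
  have hMle : max π π' ≤ 1 - a := max_le hπb hπ'b
  have hkey : a ^ 2 * max π π' ≤ π * (1 - a) ^ 2 := by
    nlinarith [mul_le_mul_of_nonneg_left hMle (sq_nonneg a),
      mul_le_mul_of_nonneg_right hπa (mul_nonneg ha0.le h1a.le),
      mul_le_mul_of_nonneg_left (show a ≤ 1 - a by linarith) (mul_nonneg hπ0.le h1a.le)]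
  have hstep : (π - π') ^ 2 / (2 * π) * (a / (1 - a)) ^ 2
      ≤ (π - π') ^ 2 / (2 * max π π') := by
    rw [div_pow, div_mul_div_comm, div_le_div_iff₀ (by positivity) (by positivity)]
    nlinarith [mul_le_mul_of_nonneg_left hkey (sq_nonneg (π - π'))]
  have hd1 : ξ * ((π - π') ^ 2 / (2 * π) * (a / (1 - a)) ^ 2)
      ≤ bernoulliKL (ξ * π) (ξ * π') :=
    le_trans (mul_le_mul_of_nonneg_left hstep hξ0.le) hB
  have hd2 : ξ * a * Dtil ≤ ξ * π * Dtil :=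
    mul_le_mul_of_nonneg_right (mul_le_mul_of_nonneg_left hπa hξ0.le) hDnn
  rw [hpart1]
  have hexp : ξ * ((π - π') ^ 2 / (2 * π) * (a / (1 - a)) ^ 2 + a * Dtil)
      = ξ * ((π - π') ^ 2 / (2 * π) * (a / (1 - a)) ^ 2) + ξ * a * Dtil := by ring
  rw [hexp]
  linarith
end
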